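/- Let B be a finitely generated projective R-algebra and x ∈ B with deg_R(x) = 2. Then R[x] is a projective R-module if and only if ax ∉ R for every nonzero a ∈ R; in particular this holds whenever 1, x can be extended to an R-module basis of B. -/

import Mathlib

/-- `x` satisfies a monic polynomial of degree `n` over `R`. -/
def SatisfiesMonicDeg (R : Type*) {B : Type*} [CommRing R] [Ring B] [Algebra R B]
    (x : B) (n : ℕ) : Prop :=
  ∃ f : Polynomial R, f.Monic ∧ f.natDegree = n ∧ Polynomial.aeval x f = 0

/-- The degree of `x` over `R`. -/
noncomputable def elemDeg (R : Type*) {B : Type*} [CommRing R] [Ring B] [Algebra R B]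
    (x : B) : ℕ :=
  sInf {n | 0 < n ∧ SatisfiesMonicDeg R x n}

/-- For `x ∈ B` of degree `2`, the subalgebra `R[x]` is projective as an `R`-module if and only
if `a • x ∉ R` for every nonzero `a ∈ R`; in particular this holds whenever `1, x` belong to an
`R`-module basis of `B`. -/
theorem stmt3 (R B : Type) [CommRing R] [IsNoetherianRing R] [Ring B] [Algebra R B]
    [Module.Finite R B] [Module.Projective R B]
    (hconn : ∀ e : R, IsIdempotentElem e → e = 0 ∨ e = 1)
    (x : B) (hdeg : elemDeg R x = 2) :
    (Module.Projective R (Algebra.adjoin R {x}) ↔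
      ∀ a : R, a ≠ 0 → a • x ∉ (algebraMap R B).range) ∧
    ((∃ (ι : Type) (b : Module.Basis ι R B) (i j : ι), i ≠ j ∧ b i = 1 ∧ b j = x) →
      Module.Projective R (Algebra.adjoin R {x})) := by
  classical
  unfold elemDeg at hdeg
  -- basic consequences of `elemDeg R x = 2`
  have hset : {n | 0 < n ∧ SatisfiesMonicDeg R x n}.Nonempty := by
    by_contra h
    rw [Set.not_nonempty_iff_eq_empty] at h
    rw [h, Nat.sInf_empty] at hdeg
    exact absurd hdeg (by norm_num)
  have h2 : SatisfiesMonicDeg R x 2 := by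
    have h := Nat.sInf_mem hset
    rw [hdeg] at h
    exact h.2
  obtain ⟨f, hfm, hfd, hfe⟩ := h2
  haveI hnontriv : Nontrivial R := by
    by_contra h
    rw [not_nontrivial_iff_subsingleton] at h
    have hf0 : f = 0 := Subsingleton.elim _ _
    rw [hf0, Polynomial.natDegree_zero] at hfd
    exact absurd hfd (by norm_num)
  have h1x : ∀ c : R, x ≠ algebraMap R B c := by
    intro c hc
    have hmem : 1 ∈ {n | 0 < n ∧ SatisfiesMonicDeg R x n} :=
      ⟨Nat.one_pos, Polynomial.X - Polynomial.C c, Polynomial.monic_X_sub_C c,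
        Polynomial.natDegree_X_sub_C c, by simp [hc]⟩
    have hle := Nat.sInf_le hmem
    rw [hdeg] at hle
    omega
  set P := f.coeff 1 with hP
  set Q := f.coeff 0 with hQ
  have hc2 : f.coeff 2 = 1 := by
    have h := hfm.coeff_natDegree
    rwa [hfd] at h
  have hfeq : f = Polynomial.X ^ 2 + Polynomial.C P * Polynomial.X + Polynomial.C Q := by
    ext n
    rcases n with _ | _ | _ | n
    · simp [hQ]
    · simp [hP]
    · simp [hc2, Polynomial.coeff_X_pow]
    · rw [Polynomial.coeff_eq_zero_of_natDegree_lt (by omega : f.natDegree < n + 3)]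
      simp [Polynomial.coeff_X_pow, Polynomial.coeff_C]
  have hq : x * x + algebraMap R B P * x + algebraMap R B Q = 0 := by
    have h2' := congrArg (Polynomial.aeval x) hfeq
    rw [hfe] at h2'
    simp only [map_add, map_mul, map_pow, Polynomial.aeval_X, Polynomial.aeval_C] at h2'
    rw [pow_two] at h2'
    exact h2'.symm
  -- the submodule spanned by 1 and x
  set T : Submodule R B := Submodule.span R {(1 : B), x} with hTdef
  have h1T : (1 : B) ∈ T := Submodule.subset_span (Set.mem_insert _ _)
  have hxT : x ∈ T := Submodule.subset_span (Set.mem_insert_iff.2 (Or.inr rfl))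
  have hxxT : x * x ∈ T := by
    have hxx : x * x = (-P) • x + (-Q) • (1 : B) := by
      rw [neg_smul, neg_smul, Algebra.smul_def, Algebra.smul_def, mul_one]
      rw [add_assoc] at hq
      rw [eq_neg_of_add_eq_zero_left hq, neg_add]
    rw [hxx]
    exact add_mem (Submodule.smul_mem _ _ hxT) (Submodule.smul_mem _ _ h1T)
  have hmulT : ∀ y ∈ T, ∀ z ∈ T, y * z ∈ T := by
    intro y hy z hz
    refine Submodule.span_induction₂ (p := fun y z _ _ => y * z ∈ T) ?_ ?_ ?_ ?_ ?_ ?_ ?_ hy hz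
    · intro a b ha hb
      have ha' : a = 1 ∨ a = x := by simpa using ha
      have hb' : b = 1 ∨ b = x := by simpa using hb
      rcases ha' with rfl | rfl <;> rcases hb' with rfl | rfl
      · simpa using h1T
      · simpa using hxT
      · simpa using hxT
      · exact hxxT
    · intro z _; rw [zero_mul]; exact T.zero_mem
    · intro y _; rw [mul_zero]; exact T.zero_mem
    · intro y1 y2 z _ _ _ hA hB; rw [add_mul]; exact add_mem hA hB
    · intro y z1 z2 _ _ _ hA hB; rw [mul_add]; exact add_mem hA hB
    · intro r y z _ _ hA; rw [smul_mul_assoc]; exact Submodule.smul_mem _ _ hA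
    · intro r y z _ _ hA; rw [mul_smul_comm]; exact Submodule.smul_mem _ _ hA
  have hT : Subalgebra.toSubmodule (Algebra.adjoin R {x}) = T := by
    apply le_antisymm
    · intro y hy
      have hy' : y ∈ Algebra.adjoin R {x} := hy
      refine Algebra.adjoin_induction (p := fun z _ => z ∈ T) ?_ ?_ ?_ ?_ hy'
      · intro z hz
        rw [Set.mem_singleton_iff] at hz
        subst hz; exact hxT
      · intro r
        rw [Algebra.algebraMap_eq_smul_one]
        exact Submodule.smul_mem _ _ h1T
      · intro a b _ _ hA hB; exact add_mem hA hB
      · intro a b _ _ hA hB; exact hmulT _ hA _ hB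
    · rw [hTdef, Submodule.span_le]
      intro y hy
      have hy' : y = 1 ∨ y = x := by simpa using hy
      rcases hy' with rfl | rfl
      · exact (Subalgebra.mem_toSubmodule _).2 (one_mem _)
      · exact (Subalgebra.mem_toSubmodule _).2 (Algebra.subset_adjoin rfl)
  -- the linear map (Fin 2 → R) → B
  set φ : (Fin 2 → R) →ₗ[R] B :=
    (LinearMap.toSpanSingleton R B 1).comp (LinearMap.proj 0) +
      (LinearMap.toSpanSingleton R B x).comp (LinearMap.proj 1) with hφdef
  have hφ : ∀ v : Fin 2 → R, φ v = v 0 • (1 : B) + v 1 • x := by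
    intro v
    rw [hφdef]
    simp [LinearMap.toSpanSingleton_apply]
  have hrangeφ : LinearMap.range φ = T := by
    apply le_antisymm
    · rintro y ⟨v, rfl⟩
      rw [hφ]
      exact add_mem (Submodule.smul_mem _ _ h1T) (Submodule.smul_mem _ _ hxT)
    · rw [hTdef, Submodule.span_le]
      intro y hy
      have hy' : y = 1 ∨ y = x := by simpa using hy
      rcases hy' with rfl | rfl
      · exact ⟨![1, 0], by rw [hφ]; simp⟩
      · exact ⟨![0, 1], by rw [hφ]; simp⟩
  -- equivalence between the subalgebra and T
  have e2 : (Algebra.adjoin R {x}) ≃ₗ[R] T :=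
    { toFun := fun y => ⟨y.1, hT ▸ ((Subalgebra.mem_toSubmodule _).2 y.2)⟩
      invFun := fun y => ⟨y.1, (Subalgebra.mem_toSubmodule _).1 (hT.symm ▸ y.2)⟩
      map_add' := fun _ _ => rfl
      map_smul' := fun _ _ => rfl
      left_inv := fun _ => rfl
      right_inv := fun _ => rfl }
  have main : Module.Projective R (Algebra.adjoin R {x}) ↔
      ∀ a : R, a ≠ 0 → a • x ∉ (algebraMap R B).range := by
    constructor
    · intro hproj a ha hax
      obtain ⟨r, hr⟩ := hax
      haveI : Module.Projective R T := Module.Projective.of_equiv e2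
      -- split the surjection q : (Fin 2 → R) → T
      set q : (Fin 2 → R) →ₗ[R] T :=
        LinearMap.codRestrict T φ (fun v => hrangeφ ▸ LinearMap.mem_range_self φ v) with hqdef
      have hqval : ∀ v, (q v : B) = φ v := fun v => rfl
      have hqsurj : Function.Surjective q := by
        rintro ⟨y, hy⟩
        rw [← hrangeφ] at hy
        obtain ⟨v, hv⟩ := hy
        exact ⟨v, Subtype.ext hv⟩
      obtain ⟨s, hs⟩ := Module.projective_lifting_property q LinearMap.id hqsurj
      set π : (Fin 2 → R) →ₗ[R] (Fin 2 → R) := LinearMap.id - s.comp q with hπdef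
      have hsq : ∀ w : T, q (s w) = w := by
        intro w
        have := congrArg (fun g => g w) hs
        simpa using this
      have hπapp : ∀ v : Fin 2 → R, π v = v - s (q v) := by
        intro v
        rw [hπdef]
        simp
      have hπq : ∀ v, q (π v) = 0 := by
        intro v
        rw [hπapp, map_sub, hsq, sub_self]
      have hππ : ∀ v, π (π v) = π v := by
        intro v
        rw [hπapp (π v), hπq, map_zero, sub_zero]
      have hfixq : ∀ v, q v = 0 → π v = v := by
        intro v hv
        rw [hπapp, hv, map_zero, sub_zero]
      have b0 : Fin 2 → R := Pi.single (0 : Fin 2) (1 : R)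
      have hdec : ∀ v : Fin 2 → R, v = v 0 • (Pi.single (0 : Fin 2) (1 : R) : Fin 2 → R) +
          v 1 • (Pi.single (1 : Fin 2) (1 : R) : Fin 2 → R) := by
        intro v
        funext i
        fin_cases i <;> simp [Pi.single_apply]
      set c0 : Fin 2 → R := π ((Pi.single (0 : Fin 2) (1 : R) : Fin 2 → R)) with hc0def
      set c1 : Fin 2 → R := π ((Pi.single (1 : Fin 2) (1 : R) : Fin 2 → R)) with hc1def
      have hπv : ∀ v : Fin 2 → R, π v = v 0 • c0 + v 1 • c1 := by
        intro v
        conv_lhs => rw [hdec v]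
        rw [map_add, map_smul, map_smul, ← hc0def, ← hc1def]
      -- the relations in B coming from ker q
      have hrel0 : algebraMap R B (c0 0) + algebraMap R B (c0 1) * x = 0 := by
        have hq0 : q c0 = 0 := hπq _
        have hφ0 : φ c0 = 0 := by rw [← hqval, hq0]; rfl
        rw [hφ c0, Algebra.smul_def, Algebra.smul_def, mul_one] at hφ0
        exact hφ0
      have hrel1 : algebraMap R B (c1 0) + algebraMap R B (c1 1) * x = 0 := by
        have hq1 : q c1 = 0 := hπq _
        have hφ1 : φ c1 = 0 := by rw [← hqval, hq1]; rfl
        rw [hφ c1, Algebra.smul_def, Algebra.smul_def, mul_one] at hφ1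
        exact hφ1
      -- the idempotency relations among the matrix entries
      have hfix0 : c0 0 • c0 + c0 1 • c1 = c0 := by
        rw [← hπv c0]; exact hππ _
      have hfix1 : c1 0 • c0 + c1 1 • c1 = c1 := by
        rw [← hπv c1]; exact hππ _
      have h00 : c0 0 * c0 0 + c0 1 * c1 0 = c0 0 := by simpa using congrFun hfix0 0
      have h10 : c0 0 * c0 1 + c0 1 * c1 1 = c0 1 := by simpa using congrFun hfix0 1
      have h01 : c1 0 * c0 0 + c1 1 * c1 0 = c1 0 := by simpa using congrFun hfix1 0
      have h11 : c1 0 * c0 1 + c1 1 * c1 1 = c1 1 := by simpa using congrFun hfix1 1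
      -- the determinant is idempotent
      have hdd : IsIdempotentElem (c0 0 * c1 1 - c1 0 * c0 1) := by
        unfold IsIdempotentElem
        linear_combination (c1 1 + (c1 0 * c0 1 + c1 1 * c1 1 - c1 1)) * h00 + c0 0 * h11 -
          c1 0 * h10 - (c0 1 + (c0 0 * c0 1 + c0 1 * c1 1 - c0 1)) * h01
      rcases hconn _ hdd with hd0 | hd1
      · -- det = 0 : the trace is idempotent
        have ht : IsIdempotentElem (c0 0 + c1 1) := by
          unfold IsIdempotentElem
          linear_combination h00 + h11 + 2 * hd0
        rcases hconn _ ht with ht0 | ht1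
        · -- trace = 0 : π = 0, so ker q = 0, contradicting (-r, a) ∈ ker q
          have ha1 : c0 0 = 0 := by linear_combination -h00 - hd0 + c0 0 * ht0
          have ha2 : c0 1 = 0 := by linear_combination -h10 + c0 1 * ht0
          have ha3 : c1 0 = 0 := by linear_combination -h01 + c1 0 * ht0
          have ha4 : c1 1 = 0 := by linear_combination -h11 - hd0 + c1 1 * ht0
          have hc0z : c0 = 0 := by
            funext i; fin_cases i
            · exact ha1
            · exact ha2
          have hc1z : c1 = 0 := by
            funext i; fin_cases i
            · exact ha3
            · exact ha4
          have hπ0 : ∀ v, π v = 0 := by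
            intro v
            rw [hπv v, hc0z, hc1z, smul_zero, smul_zero, add_zero]
          have hφw : φ ![-r, a] = 0 := by
            rw [hφ]
            simp only [Matrix.cons_val_zero, Matrix.cons_val_one, Matrix.head_cons]
            rw [neg_smul, ← hr, Algebra.algebraMap_eq_smul_one]
            exact neg_add_cancel _
          have hqw : q ![-r, a] = 0 := Subtype.ext (by rw [hqval, hφw]; rfl)
          have hw := hfixq _ hqw
          rw [hπ0] at hw
          have : a = 0 := by
            have := congrFun hw 1
            simpa using this.symm
          exact ha this
        · -- trace = 1 : the "rank one" case, contradicting elemDeg = 2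
          have hAu : algebraMap R B (c0 0 * c0 0 - P * (c0 0 * c0 1) + Q * (c0 1 * c0 1)) = 0 := by
            have hp : (Polynomial.C (c0 0 * c0 0 - P * (c0 0 * c0 1) + Q * (c0 1 * c0 1)) :
                Polynomial R) =
                (Polynomial.C (c0 0) + Polynomial.C (c0 1) * Polynomial.X) *
                  (Polynomial.C (c0 0) - Polynomial.C (c0 1) * Polynomial.X -
                    Polynomial.C P * Polynomial.C (c0 1)) +
                (Polynomial.C (c0 1) * Polynomial.C (c0 1)) *
                  (Polynomial.X * Polynomial.X + Polynomial.C P * Polynomial.X +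
                    Polynomial.C Q) := by
              simp only [map_add, map_sub, map_mul]
              ring
            have h3 := congrArg (Polynomial.aeval x) hp
            simp only [map_add, map_sub, map_mul, Polynomial.aeval_C, Polynomial.aeval_X] at h3
            rw [hrel0, hq, zero_mul, mul_zero, add_zero] at h3
            simp only [map_add, map_sub, map_mul]
            exact h3
          set J : Ideal R :=
            Submodule.comap (LinearMap.toSpanSingleton R B x)
              (Submodule.span R {(1 : B)}) with hJdef
          have hmemJ : ∀ c : R, c ∈ J ↔ c • x ∈ Submodule.span R {(1 : B)} := by
            intro c
            rw [hJdef, Submodule.mem_comap, LinearMap.toSpanSingleton_apply]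
          have ha2J : c0 1 ∈ J := by
            rw [hmemJ]
            have hx' : (c0 1) • x = (-(c0 0)) • (1 : B) := by
              rw [Algebra.smul_def, eq_neg_of_add_eq_zero_right hrel0, neg_smul,
                Algebra.algebraMap_eq_smul_one]
            rw [hx']
            exact Submodule.smul_mem _ _ (Submodule.mem_span_singleton_self 1)
          have ha4J : c1 1 ∈ J := by
            rw [hmemJ]
            have hx' : (c1 1) • x = (-(c1 0)) • (1 : B) := by
              rw [Algebra.smul_def, eq_neg_of_add_eq_zero_right hrel1, neg_smul,
                Algebra.algebraMap_eq_smul_one]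
            rw [hx']
            exact Submodule.smul_mem _ _ (Submodule.mem_span_singleton_self 1)
          have huJ : (c0 0 * c0 0 - P * (c0 0 * c0 1) + Q * (c0 1 * c0 1)) ∈ J := by
            rw [hmemJ, Algebra.smul_def, hAu, zero_mul]
            exact Submodule.zero_mem _
          have hJtop : J = ⊤ := by
            by_contra hne
            obtain ⟨m, hm, hJm⟩ := Ideal.exists_le_maximal J hne
            have hpm := hm.isPrime
            have h11m : c0 0 * c0 0 ∈ m := by
              have hA := hJm huJ
              have hB := hJm ha2J
              have hid : c0 0 * c0 0 =
                  (c0 0 * c0 0 - P * (c0 0 * c0 1) + Q * (c0 1 * c0 1)) +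
                    (P * c0 0) * c0 1 - (Q * c0 1) * c0 1 := by ring
              rw [hid]
              exact Ideal.sub_mem _ (Ideal.add_mem _ hA (Ideal.mul_mem_left _ _ hB))
                (Ideal.mul_mem_left _ _ hB)
            have ha1m : c0 0 ∈ m := (hpm.mem_or_mem h11m).elim id id
            have hone : (1 : R) ∈ m := by
              rw [← ht1]
              exact Ideal.add_mem _ ha1m (hJm ha4J)
            exact hm.ne_top ((Ideal.eq_top_iff_one m).2 hone)
          have hxspan : x ∈ Submodule.span R {(1 : B)} := by
            have h1J : (1 : R) ∈ J := hJtop ▸ Submodule.mem_top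
            rw [hmemJ] at h1J
            rwa [one_smul] at h1J
          obtain ⟨c, hc⟩ := Submodule.mem_span_singleton.1 hxspan
          exact h1x c (hc.symm.trans (Algebra.algebraMap_eq_smul_one c).symm)
      · -- det = 1 : then 1 = 0 in B, contradicting elemDeg = 2
        have hp : (Polynomial.C (1 : R) : Polynomial R) =
            Polynomial.C (c1 1) * (Polynomial.C (c0 0) + Polynomial.C (c0 1) * Polynomial.X) -
              Polynomial.C (c0 1) *
                (Polynomial.C (c1 0) + Polynomial.C (c1 1) * Polynomial.X) := by
          rw [← hd1]
          simp only [map_add, map_sub, map_mul]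
          ring
        have h3 := congrArg (Polynomial.aeval x) hp
        simp only [map_add, map_sub, map_mul, Polynomial.aeval_C, Polynomial.aeval_X] at h3
        rw [hrel0, hrel1, mul_zero, mul_zero, sub_zero] at h3
        rw [map_one] at h3
        have hx0 : x = 0 := by rw [← mul_one x, h3, mul_zero]
        exact h1x 0 (by rw [hx0, map_zero])
    · -- converse: if a • x ∉ R for all a ≠ 0, then R[x] ≅ R² is free
      intro H
      have hker : LinearMap.ker φ = ⊥ := by
        rw [eq_bot_iff]
        intro v hv
        have hv' : v 0 • (1 : B) + v 1 • x = 0 := by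
          rw [← hφ]
          exact hv
        by_cases hv1 : v 1 = 0
        · have h0 : v 0 • (1 : B) = 0 := by rwa [hv1, zero_smul, add_zero] at hv'
          have h0' : v 0 = 0 := by
            by_contra hne
            apply H (v 0) hne
            have hx0 : v 0 • x = 0 := by
              rw [← one_mul x, ← smul_mul_assoc, h0, zero_mul]
            exact ⟨0, by rw [map_zero]; exact hx0.symm⟩
          have : v = 0 := by
            funext i; fin_cases i
            · exact h0'
            · exact hv1
          simp [this]
        · exfalso
          apply H (v 1) hv1
          have hx1 : v 1 • x = -(v 0 • (1 : B)) := eq_neg_of_add_eq_zero_right hv'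
          refine ⟨-(v 0), ?_⟩
          rw [map_neg, Algebra.algebraMap_eq_smul_one]
          exact hx1.symm
      have hinj : Function.Injective φ := LinearMap.ker_eq_bot.1 hker
      have e3 : (Fin 2 → R) ≃ₗ[R] T :=
        (LinearEquiv.ofInjective φ hinj).trans (LinearEquiv.ofEq _ _ hrangeφ)
      haveI : Module.Projective R T := Module.Projective.of_equiv e3
      exact Module.Projective.of_equiv e2.symm
  refine ⟨main, fun h => main.2 ?_⟩
  obtain ⟨ι, b, i, j, hij, hb1, hbx⟩ := h
  intro a ha hax
  obtain ⟨r, hr⟩ := hax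
  apply ha
  have heq : a • b j = r • b i := by
    rw [hbx, ← hr, hb1, Algebra.algebraMap_eq_smul_one]
  have h4 := congrArg (fun y => (b.repr y) j) heq
  simp only [map_smul, Finsupp.smul_apply, Module.Basis.repr_self, Finsupp.single_apply,
    smul_eq_mul] at h4
  rw [if_neg hij] at h4
  simpa using h4
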